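/- arXiv:1405.6040 — 2 statements merged into one kernel-verified Lean document; each statement's English description precedes it below -/
import Mathlib

section
/- Let σ, τ be 2-cocycles on a Hopf algebra H. The maps Δ^τ_{σ,τ} = Δ : H(σ,τ) → H(σ,τ) ⊗ H(τ,τ) and Δ^σ_{σ,τ} = Δ : H(σ,τ) → H(σ,σ) ⊗ H(σ,τ), given by the comultiplication of H, are algebra homomorphisms. -/
/- STATEMENT 6: for 2-cocycles σ, τ on a Hopf algebra H, the comultiplication Δ
gives algebra homomorphisms `Δ^τ_{σ,τ} : H(σ,τ) → H(σ,τ) ⊗ H(τ,τ)` and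
`Δ^σ_{σ,τ} : H(σ,τ) → H(σ,σ) ⊗ H(σ,τ)`. -/

open Coalgebra

universe u

variable (k H : Type*) [Field k] [Ring H] [HopfAlgebra k H]

def IsRightCocycle (σ : H →ₗ[k] H →ₗ[k] k) : Prop :=
  ∀ (h g l : H) (ιh : Type u) (rh : Coalgebra.Repr k h ιh) (ιg : Type u)
    (rg : Coalgebra.Repr k g ιg)
    (ιl : Type u) (rl : Coalgebra.Repr k l ιl),
    ∑ i ∈ rh.index, ∑ j ∈ rg.index,
        σ (rh.left i) (rg.left j) * σ (rh.right i * rg.right j) l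
      = ∑ j ∈ rg.index, ∑ m ∈ rl.index,
        σ (rg.left j) (rl.left m) * σ h (rg.right j * rl.right m)

def IsUnitalCocycle (σ : H →ₗ[k] H →ₗ[k] k) : Prop :=
  ∀ h : H, σ h 1 = Coalgebra.counit (R := k) h ∧ σ 1 h = Coalgebra.counit (R := k) h

def IsConvInverse (σ σ' : H →ₗ[k] H →ₗ[k] k) : Prop :=
  ∀ (h g : H) (ιh : Type u) (rh : Coalgebra.Repr k h ιh) (ιg : Type u)
    (rg : Coalgebra.Repr k g ιg),
    (∑ i ∈ rh.index, ∑ j ∈ rg.index,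
        σ (rh.left i) (rg.left j) * σ' (rh.right i) (rg.right j)
      = Coalgebra.counit (R := k) h * Coalgebra.counit (R := k) g)
    ∧ (∑ i ∈ rh.index, ∑ j ∈ rg.index,
        σ' (rh.left i) (rg.left j) * σ (rh.right i) (rg.right j)
      = Coalgebra.counit (R := k) h * Coalgebra.counit (R := k) g)

/-- `m h g = σ(h₁,g₁) h₂g₂ σ'(h₃,g₃)`. -/
def IsCocycleProduct (σ σ' : H →ₗ[k] H →ₗ[k] k) (m : H →ₗ[k] H →ₗ[k] H) : Prop :=
  ∀ (h g : H) (ιh : Type u) (rh : Coalgebra.Repr k h ιh)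
    (κh : ιh → Type u) (rh2 : ∀ i : ιh, Coalgebra.Repr k (rh.right i) (κh i))
    (ιg : Type u) (rg : Coalgebra.Repr k g ιg)
    (κg : ιg → Type u) (rg2 : ∀ j : ιg, Coalgebra.Repr k (rg.right j) (κg j)),
    m h g = ∑ i ∈ rh.index, ∑ j ∈ rg.index, ∑ a ∈ (rh2 i).index, ∑ b ∈ (rg2 j).index,
      (σ (rh.left i) (rg.left j) * σ' ((rh2 i).right a) ((rg2 j).right b))
        • ((rh2 i).left a * (rg2 j).left b)

namespace CocycleAux
open TensorProduct
variable {k A : Type*} [Field k] [Ring A] [HopfAlgebra k A]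

/-- reindex a repr to have index type in `Type u` -/
noncomputable def uRepr {x : A} {ι : Type*} (r : Coalgebra.Repr k x ι) :
    Coalgebra.Repr k x (ULift.{u} (Fin r.index.card)) where
  index := Finset.univ
  left i := r.left (r.index.equivFin.symm i.down).1
  right i := r.right (r.index.equivFin.symm i.down).1
  eq := by
    rw [← r.eq, ← Finset.sum_attach r.index (fun i => r.left i ⊗ₜ[k] r.right i)]
    exact Fintype.sum_equiv (Equiv.ulift.trans r.index.equivFin.symm) _ _ (fun i => rfl)

noncomputable abbrev ρ (x : A) := uRepr.{u} (Coalgebra.Repr.arbitrary k x)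


/-- comultiplication on `A ⊗ A` -/
noncomputable def dC : A ⊗[k] A →ₗ[k] (A ⊗[k] A) ⊗[k] (A ⊗[k] A) :=
  (tensorTensorTensorComm k A A A A).toLinearMap ∘ₗ
    _root_.TensorProduct.map (Coalgebra.comul (R := k)) (Coalgebra.comul (R := k))

lemma dC_tmul {h g : A} {ι ι' : Type*} (rh : Coalgebra.Repr k h ι) (rg : Coalgebra.Repr k g ι') :
    dC (h ⊗ₜ[k] g) = ∑ i ∈ rh.index, ∑ j ∈ rg.index,
      (rh.left i ⊗ₜ[k] rg.left j) ⊗ₜ[k] (rh.right i ⊗ₜ[k] rg.right j) := by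
  simp only [dC, LinearMap.coe_comp, LinearEquiv.coe_coe, Function.comp_apply,
    _root_.TensorProduct.map_tmul,
    ← rh.eq, ← rg.eq, sum_tmul, tmul_sum, map_sum, tensorTensorTensorComm_tmul]
  exact Finset.sum_comm

/-- convolution product of two linear maps on `A ⊗ A` with values in an algebra -/
noncomputable def conv {B : Type*} [Ring B] [Algebra k B]
    (f g : A ⊗[k] A →ₗ[k] B) : A ⊗[k] A →ₗ[k] B :=
  LinearMap.mul' k B ∘ₗ _root_.TensorProduct.map f g ∘ₗ dC

lemma conv_tmul {B : Type*} [Ring B] [Algebra k B] (f g : A ⊗[k] A →ₗ[k] B)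
    {h g0 : A} {ι ι' : Type*} (rh : Coalgebra.Repr k h ι) (rg : Coalgebra.Repr k g0 ι') :
    conv f g (h ⊗ₜ[k] g0) = ∑ i ∈ rh.index, ∑ j ∈ rg.index,
      f (rh.left i ⊗ₜ[k] rg.left j) * g (rh.right i ⊗ₜ[k] rg.right j) := by
  simp only [conv, LinearMap.coe_comp, Function.comp_apply, dC_tmul rh rg, map_sum,
    _root_.TensorProduct.map_tmul, LinearMap.mul'_apply]

/-- `f ⊠ g = (f ⊗ g) ∘ Δ_C` -/
noncomputable def boxt (f g : A ⊗[k] A →ₗ[k] A) : A ⊗[k] A →ₗ[k] A ⊗[k] A :=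
  _root_.TensorProduct.map f g ∘ₗ dC

lemma boxt_tmul (f g : A ⊗[k] A →ₗ[k] A) {h g0 : A} {ι ι' : Type*}
    (rh : Coalgebra.Repr k h ι) (rg : Coalgebra.Repr k g0 ι') :
    boxt f g (h ⊗ₜ[k] g0) = ∑ i ∈ rh.index, ∑ j ∈ rg.index,
      f (rh.left i ⊗ₜ[k] rg.left j) ⊗ₜ[k] g (rh.right i ⊗ₜ[k] rg.right j) := by
  simp only [boxt, LinearMap.coe_comp, Function.comp_apply, dC_tmul rh rg, map_sum,
    _root_.TensorProduct.map_tmul]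


/-- generic expansion of a linear map applied to a tensor of double sums -/
lemma map_sum2_tmul_sum2 {M N W : Type*} [AddCommMonoid M] [AddCommMonoid N] [AddCommMonoid W]
    [Module k M] [Module k N] [Module k W]
    (F : M ⊗[k] N →ₗ[k] W) {ι₁ ι₂ : Type*} (s : Finset ι₁) (s' : Finset ι₂)
    {κ₁ : ι₁ → Type*} {κ₂ : ι₂ → Type*} (t : ∀ i, Finset (κ₁ i)) (t' : ∀ j, Finset (κ₂ j))
    (u : ∀ i, κ₁ i → M) (v : ∀ j, κ₂ j → N) :
    F ((∑ i ∈ s, ∑ a ∈ t i, u i a) ⊗ₜ[k] (∑ j ∈ s', ∑ b ∈ t' j, v j b))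
      = ∑ i ∈ s, ∑ j ∈ s', ∑ a ∈ t i, ∑ b ∈ t' j, F (u i a ⊗ₜ[k] v j b) := by
  have inner : ∀ m : M, F (m ⊗ₜ[k] ∑ j ∈ s', ∑ b ∈ t' j, v j b)
      = ∑ j ∈ s', ∑ b ∈ t' j, F (m ⊗ₜ[k] v j b) := fun m => by
    rw [tmul_sum, map_sum]
    exact Finset.sum_congr rfl fun j _ => by rw [tmul_sum, map_sum]
  rw [sum_tmul, map_sum]
  refine Finset.sum_congr rfl fun i _ => ?_
  rw [sum_tmul, map_sum]
  rw [Finset.sum_congr rfl fun a _ => inner (u i a)]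
  exact Finset.sum_comm

/-- the (3,3)-shuffle `(x₁⊗(x₂⊗x₃))⊗(y₁⊗(y₂⊗y₃)) ↦ (x₁⊗y₁)⊗((x₂⊗y₂)⊗(x₃⊗y₃))` -/
noncomputable def shuf : (A ⊗[k] (A ⊗[k] A)) ⊗[k] (A ⊗[k] (A ⊗[k] A)) →ₗ[k]
    (A ⊗[k] A) ⊗[k] ((A ⊗[k] A) ⊗[k] (A ⊗[k] A)) :=
  LinearMap.lTensor (A ⊗[k] A) (tensorTensorTensorComm k A A A A).toLinearMap ∘ₗ
    (tensorTensorTensorComm k A (A ⊗[k] A) A (A ⊗[k] A)).toLinearMap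

@[simp] lemma shuf_tmul (x₁ x₂ x₃ y₁ y₂ y₃ : A) :
    shuf (k := k) ((x₁ ⊗ₜ[k] (x₂ ⊗ₜ[k] x₃)) ⊗ₜ[k] (y₁ ⊗ₜ[k] (y₂ ⊗ₜ[k] y₃)))
      = (x₁ ⊗ₜ[k] y₁) ⊗ₜ[k] ((x₂ ⊗ₜ[k] y₂) ⊗ₜ[k] (x₃ ⊗ₜ[k] y₃)) := by
  simp [shuf, tensorTensorTensorComm_tmul]

/-- left tree sum of a doubly-split representation -/
noncomputable def treeL {x : A} {ι κ : Type*} (rx : Coalgebra.Repr k x ι)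
    (rL : ∀ i : ι, Coalgebra.Repr k (rx.left i) κ) : A ⊗[k] (A ⊗[k] A) :=
  ∑ i ∈ rx.index, ∑ a ∈ (rL i).index,
    (rL i).left a ⊗ₜ[k] ((rL i).right a ⊗ₜ[k] rx.right i)

/-- right tree sum of a doubly-split representation -/
noncomputable def treeR {x : A} {ι κ : Type*} (rx : Coalgebra.Repr k x ι)
    (rR : ∀ i : ι, Coalgebra.Repr k (rx.right i) κ) : A ⊗[k] (A ⊗[k] A) :=
  ∑ i ∈ rx.index, ∑ a ∈ (rR i).index,
    rx.left i ⊗ₜ[k] ((rR i).left a ⊗ₜ[k] (rR i).right a)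

lemma treeL_eq_treeR {x : A} {ι κ Λ : Type*} (rx : Coalgebra.Repr k x ι)
    (rL : ∀ i : ι, Coalgebra.Repr k (rx.left i) κ)
    (rR : ∀ i : ι, Coalgebra.Repr k (rx.right i) Λ) :
    treeL rx rL = treeR rx rR :=
  Coalgebra.sum_tmul_tmul_eq rx rL rR


section ConvLemmas
variable {B : Type*} [Ring B] [Algebra k B]

/-- evaluation map for associativity: `f(x₁⊗y₁) * (g(x₂⊗y₂) * l(x₃⊗y₃))` -/
noncomputable def thetaA (f g l : A ⊗[k] A →ₗ[k] B) :
    (A ⊗[k] (A ⊗[k] A)) ⊗[k] (A ⊗[k] (A ⊗[k] A)) →ₗ[k] B :=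
  (LinearMap.mul' k B ∘ₗ LinearMap.lTensor B (LinearMap.mul' k B)) ∘ₗ
    _root_.TensorProduct.map f (_root_.TensorProduct.map g l) ∘ₗ shuf

@[simp] lemma thetaA_tmul (f g l : A ⊗[k] A →ₗ[k] B) (x₁ x₂ x₃ y₁ y₂ y₃ : A) :
    thetaA f g l ((x₁ ⊗ₜ[k] (x₂ ⊗ₜ[k] x₃)) ⊗ₜ[k] (y₁ ⊗ₜ[k] (y₂ ⊗ₜ[k] y₃)))
      = f (x₁ ⊗ₜ[k] y₁) * (g (x₂ ⊗ₜ[k] y₂) * l (x₃ ⊗ₜ[k] y₃)) := by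
  simp [thetaA]

lemma conv_assoc (f g l : A ⊗[k] A →ₗ[k] B) :
    conv (conv f g) l = conv f (conv g l) := by
  apply _root_.TensorProduct.ext'
  intro x y
  have rx := Coalgebra.Repr.arbitrary k x
  have ry := Coalgebra.Repr.arbitrary k y
  have rxL : ∀ i : A × A, Coalgebra.Repr k (rx.left i) (A × A) := fun i => Coalgebra.Repr.arbitrary k _
  have rxR : ∀ i : A × A, Coalgebra.Repr k (rx.right i) (A × A) := fun i => Coalgebra.Repr.arbitrary k _
  have ryL : ∀ j : A × A, Coalgebra.Repr k (ry.left j) (A × A) := fun j => Coalgebra.Repr.arbitrary k _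
  have ryR : ∀ j : A × A, Coalgebra.Repr k (ry.right j) (A × A) := fun j => Coalgebra.Repr.arbitrary k _
  have hL : conv (conv f g) l (x ⊗ₜ[k] y) = thetaA f g l (treeL rx rxL ⊗ₜ[k] treeL ry ryL) := by
    rw [treeL, treeL, map_sum2_tmul_sum2, conv_tmul _ _ rx ry]
    refine Finset.sum_congr rfl fun i _ => Finset.sum_congr rfl fun j _ => ?_
    rw [conv_tmul f g (rxL i) (ryL j), Finset.sum_mul]
    refine Finset.sum_congr rfl fun a _ => ?_
    rw [Finset.sum_mul]
    refine Finset.sum_congr rfl fun b _ => ?_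
    rw [thetaA_tmul, mul_assoc]
  have hR : conv f (conv g l) (x ⊗ₜ[k] y) = thetaA f g l (treeR rx rxR ⊗ₜ[k] treeR ry ryR) := by
    rw [treeR, treeR, map_sum2_tmul_sum2, conv_tmul _ _ rx ry]
    refine Finset.sum_congr rfl fun i _ => Finset.sum_congr rfl fun j _ => ?_
    rw [conv_tmul g l (rxR i) (ryR j), Finset.mul_sum]
    refine Finset.sum_congr rfl fun a _ => ?_
    rw [Finset.mul_sum]
    refine Finset.sum_congr rfl fun b _ => ?_
    rw [thetaA_tmul]
  rw [hL, hR, treeL_eq_treeR rx rxL rxR, treeL_eq_treeR ry ryL ryR]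

end ConvLemmas
/-- scalar-valued map embedded into an algebra -/
noncomputable def sc (B : Type*) [Ring B] [Algebra k B] (f : A ⊗[k] A →ₗ[k] k) :
    A ⊗[k] A →ₗ[k] B := Algebra.linearMap k B ∘ₗ f

@[simp] lemma sc_apply {B : Type*} [Ring B] [Algebra k B] (f : A ⊗[k] A →ₗ[k] k)
    (z : A ⊗[k] A) : sc B f z = algebraMap k B (f z) := rfl

/-- counit of `A ⊗ A` -/
noncomputable def epsC : A ⊗[k] A →ₗ[k] k :=
  LinearMap.mul' k k ∘ₗ _root_.TensorProduct.map (Coalgebra.counit (R := k)) (Coalgebra.counit (R := k))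

@[simp] lemma epsC_tmul (x y : A) :
    epsC (x ⊗ₜ[k] y) = Coalgebra.counit (R := k) x * Coalgebra.counit (R := k) y := rfl

lemma sum_counit_smul {x : A} {ι : Type*} (rx : Coalgebra.Repr k x ι) :
    ∑ i ∈ rx.index, Coalgebra.counit (R := k) (rx.right i) • rx.left i = x := by
  have h := congrArg (_root_.TensorProduct.rid k A) (Coalgebra.sum_tmul_counit_eq rx)
  simp only [map_sum, _root_.TensorProduct.rid_tmul, one_smul] at h
  exact h

/-- right unit law for convolution -/
lemma conv_counit_right {B : Type*} [Ring B] [Algebra k B] (g : A ⊗[k] A →ₗ[k] B) :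
    conv g (sc B epsC) = g := by
  apply _root_.TensorProduct.ext'
  intro x y
  have rx := Coalgebra.Repr.arbitrary k x
  have ry := Coalgebra.Repr.arbitrary k y
  rw [conv_tmul _ _ rx ry]
  have step : ∀ i j, g (rx.left i ⊗ₜ[k] ry.left j) * sc B epsC (rx.right i ⊗ₜ[k] ry.right j)
      = g ((Coalgebra.counit (R := k) (rx.right i) *
          Coalgebra.counit (R := k) (ry.right j)) • (rx.left i ⊗ₜ[k] ry.left j)) := by
    intro i j
    rw [map_smul, sc_apply, epsC_tmul, ← Algebra.commutes, ← Algebra.smul_def]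
  simp only [step, ← map_sum]
  congr 1
  calc ∑ i ∈ rx.index, ∑ j ∈ ry.index,
        (Coalgebra.counit (R := k) (rx.right i) * Coalgebra.counit (R := k) (ry.right j)) •
          (rx.left i ⊗ₜ[k] ry.left j)
      = (∑ i ∈ rx.index, Coalgebra.counit (R := k) (rx.right i) • rx.left i) ⊗ₜ[k]
        (∑ j ∈ ry.index, Coalgebra.counit (R := k) (ry.right j) • ry.left j) := by
        rw [sum_tmul]
        refine Finset.sum_congr rfl fun i _ => ?_
        rw [tmul_sum]
        refine Finset.sum_congr rfl fun j _ => ?_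
        conv_rhs => rw [← smul_tmul', tmul_smul, smul_smul]
    _ = x ⊗ₜ[k] y := by rw [sum_counit_smul rx, sum_counit_smul ry]

section Slides
/-- `f(x₁y₁) • (g(x₂y₂) ⊗ h(x₃y₃))` -/
noncomputable def theta1 (f : A ⊗[k] A →ₗ[k] k) (g h : A ⊗[k] A →ₗ[k] A) :
    (A ⊗[k] (A ⊗[k] A)) ⊗[k] (A ⊗[k] (A ⊗[k] A)) →ₗ[k] A ⊗[k] A :=
  (_root_.TensorProduct.lid k (A ⊗[k] A)).toLinearMap ∘ₗ
    _root_.TensorProduct.map f (_root_.TensorProduct.map g h) ∘ₗ shuf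

@[simp] lemma theta1_tmul (f : A ⊗[k] A →ₗ[k] k) (g h : A ⊗[k] A →ₗ[k] A)
    (x₁ x₂ x₃ y₁ y₂ y₃ : A) :
    theta1 f g h ((x₁ ⊗ₜ[k] (x₂ ⊗ₜ[k] x₃)) ⊗ₜ[k] (y₁ ⊗ₜ[k] (y₂ ⊗ₜ[k] y₃)))
      = f (x₁ ⊗ₜ[k] y₁) • (g (x₂ ⊗ₜ[k] y₂) ⊗ₜ[k] h (x₃ ⊗ₜ[k] y₃)) := by
  simp [theta1]

/-- `f(x₃y₃) • (g(x₁y₁) ⊗ h(x₂y₂))` -/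
noncomputable def theta2 (f : A ⊗[k] A →ₗ[k] k) (g h : A ⊗[k] A →ₗ[k] A) :
    (A ⊗[k] (A ⊗[k] A)) ⊗[k] (A ⊗[k] (A ⊗[k] A)) →ₗ[k] A ⊗[k] A :=
  (_root_.TensorProduct.rid k (A ⊗[k] A)).toLinearMap ∘ₗ
    _root_.TensorProduct.map (_root_.TensorProduct.map g h) f ∘ₗ
    (_root_.TensorProduct.assoc k (A ⊗[k] A) (A ⊗[k] A) (A ⊗[k] A)).symm.toLinearMap ∘ₗ shuf

@[simp] lemma theta2_tmul (f : A ⊗[k] A →ₗ[k] k) (g h : A ⊗[k] A →ₗ[k] A)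
    (x₁ x₂ x₃ y₁ y₂ y₃ : A) :
    theta2 f g h ((x₁ ⊗ₜ[k] (x₂ ⊗ₜ[k] x₃)) ⊗ₜ[k] (y₁ ⊗ₜ[k] (y₂ ⊗ₜ[k] y₃)))
      = f (x₃ ⊗ₜ[k] y₃) • (g (x₁ ⊗ₜ[k] y₁) ⊗ₜ[k] h (x₂ ⊗ₜ[k] y₂)) := by
  simp [theta2]

/-- `g(x₁y₁) ⊗ (f(x₂y₂) • h(x₃y₃))` -/
noncomputable def theta3 (f : A ⊗[k] A →ₗ[k] k) (g h : A ⊗[k] A →ₗ[k] A) :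
    (A ⊗[k] (A ⊗[k] A)) ⊗[k] (A ⊗[k] (A ⊗[k] A)) →ₗ[k] A ⊗[k] A :=
  _root_.TensorProduct.map g ((_root_.TensorProduct.lid k A).toLinearMap ∘ₗ _root_.TensorProduct.map f h) ∘ₗ shuf

@[simp] lemma theta3_tmul (f : A ⊗[k] A →ₗ[k] k) (g h : A ⊗[k] A →ₗ[k] A)
    (x₁ x₂ x₃ y₁ y₂ y₃ : A) :
    theta3 f g h ((x₁ ⊗ₜ[k] (x₂ ⊗ₜ[k] x₃)) ⊗ₜ[k] (y₁ ⊗ₜ[k] (y₂ ⊗ₜ[k] y₃)))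
      = g (x₁ ⊗ₜ[k] y₁) ⊗ₜ[k] (f (x₂ ⊗ₜ[k] y₂) • h (x₃ ⊗ₜ[k] y₃)) := by
  simp [theta3]

lemma slide_L1 (f : A ⊗[k] A →ₗ[k] k) (g h : A ⊗[k] A →ₗ[k] A) :
    boxt (conv (sc A f) g) h = conv (sc (A ⊗[k] A) f) (boxt g h) := by
  apply _root_.TensorProduct.ext'
  intro x y
  have rx := Coalgebra.Repr.arbitrary k x
  have ry := Coalgebra.Repr.arbitrary k y
  have rxL : ∀ i : A × A, Coalgebra.Repr k (rx.left i) (A × A) := fun i => Coalgebra.Repr.arbitrary k _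
  have rxR : ∀ i : A × A, Coalgebra.Repr k (rx.right i) (A × A) := fun i => Coalgebra.Repr.arbitrary k _
  have ryL : ∀ j : A × A, Coalgebra.Repr k (ry.left j) (A × A) := fun j => Coalgebra.Repr.arbitrary k _
  have ryR : ∀ j : A × A, Coalgebra.Repr k (ry.right j) (A × A) := fun j => Coalgebra.Repr.arbitrary k _
  have hL : boxt (conv (sc A f) g) h (x ⊗ₜ[k] y)
      = theta1 f g h (treeL rx rxL ⊗ₜ[k] treeL ry ryL) := by
    rw [treeL, treeL, map_sum2_tmul_sum2, boxt_tmul _ _ rx ry]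
    refine Finset.sum_congr rfl fun i _ => Finset.sum_congr rfl fun j _ => ?_
    rw [conv_tmul (sc A f) g (rxL i) (ryL j), sum_tmul]
    refine Finset.sum_congr rfl fun a _ => ?_
    rw [sum_tmul]
    refine Finset.sum_congr rfl fun b _ => ?_
    rw [theta1_tmul, sc_apply, ← Algebra.smul_def, ← smul_tmul']
  have hR : conv (sc (A ⊗[k] A) f) (boxt g h) (x ⊗ₜ[k] y)
      = theta1 f g h (treeR rx rxR ⊗ₜ[k] treeR ry ryR) := by
    rw [treeR, treeR, map_sum2_tmul_sum2, conv_tmul _ _ rx ry]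
    refine Finset.sum_congr rfl fun i _ => Finset.sum_congr rfl fun j _ => ?_
    rw [boxt_tmul g h (rxR i) (ryR j), Finset.mul_sum]
    refine Finset.sum_congr rfl fun a _ => ?_
    rw [Finset.mul_sum]
    refine Finset.sum_congr rfl fun b _ => ?_
    rw [theta1_tmul, sc_apply, ← Algebra.smul_def]
  rw [hL, hR, treeL_eq_treeR rx rxL rxR, treeL_eq_treeR ry ryL ryR]

lemma slide_L2 (f : A ⊗[k] A →ₗ[k] k) (g h : A ⊗[k] A →ₗ[k] A) :
    boxt g (conv h (sc A f)) = conv (boxt g h) (sc (A ⊗[k] A) f) := by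
  apply _root_.TensorProduct.ext'
  intro x y
  have rx := Coalgebra.Repr.arbitrary k x
  have ry := Coalgebra.Repr.arbitrary k y
  have rxL : ∀ i : A × A, Coalgebra.Repr k (rx.left i) (A × A) := fun i => Coalgebra.Repr.arbitrary k _
  have rxR : ∀ i : A × A, Coalgebra.Repr k (rx.right i) (A × A) := fun i => Coalgebra.Repr.arbitrary k _
  have ryL : ∀ j : A × A, Coalgebra.Repr k (ry.left j) (A × A) := fun j => Coalgebra.Repr.arbitrary k _
  have ryR : ∀ j : A × A, Coalgebra.Repr k (ry.right j) (A × A) := fun j => Coalgebra.Repr.arbitrary k _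
  have hL : boxt g (conv h (sc A f)) (x ⊗ₜ[k] y)
      = theta2 f g h (treeR rx rxR ⊗ₜ[k] treeR ry ryR) := by
    rw [treeR, treeR, map_sum2_tmul_sum2, boxt_tmul _ _ rx ry]
    refine Finset.sum_congr rfl fun i _ => Finset.sum_congr rfl fun j _ => ?_
    rw [conv_tmul h (sc A f) (rxR i) (ryR j), tmul_sum]
    refine Finset.sum_congr rfl fun a _ => ?_
    rw [tmul_sum]
    refine Finset.sum_congr rfl fun b _ => ?_
    rw [theta2_tmul, sc_apply, ← Algebra.commutes, ← Algebra.smul_def, tmul_smul]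
  have hR : conv (boxt g h) (sc (A ⊗[k] A) f) (x ⊗ₜ[k] y)
      = theta2 f g h (treeL rx rxL ⊗ₜ[k] treeL ry ryL) := by
    rw [treeL, treeL, map_sum2_tmul_sum2, conv_tmul _ _ rx ry]
    refine Finset.sum_congr rfl fun i _ => Finset.sum_congr rfl fun j _ => ?_
    rw [boxt_tmul g h (rxL i) (ryL j), Finset.sum_mul]
    refine Finset.sum_congr rfl fun a _ => ?_
    rw [Finset.sum_mul]
    refine Finset.sum_congr rfl fun b _ => ?_
    rw [theta2_tmul, sc_apply, ← Algebra.commutes, ← Algebra.smul_def]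
  rw [hL, hR, treeL_eq_treeR rx rxL rxR, treeL_eq_treeR ry ryL ryR]

lemma slide_L3 (f : A ⊗[k] A →ₗ[k] k) (g h : A ⊗[k] A →ₗ[k] A) :
    boxt g (conv (sc A f) h) = boxt (conv g (sc A f)) h := by
  apply _root_.TensorProduct.ext'
  intro x y
  have rx := Coalgebra.Repr.arbitrary k x
  have ry := Coalgebra.Repr.arbitrary k y
  have rxL : ∀ i : A × A, Coalgebra.Repr k (rx.left i) (A × A) := fun i => Coalgebra.Repr.arbitrary k _
  have rxR : ∀ i : A × A, Coalgebra.Repr k (rx.right i) (A × A) := fun i => Coalgebra.Repr.arbitrary k _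
  have ryL : ∀ j : A × A, Coalgebra.Repr k (ry.left j) (A × A) := fun j => Coalgebra.Repr.arbitrary k _
  have ryR : ∀ j : A × A, Coalgebra.Repr k (ry.right j) (A × A) := fun j => Coalgebra.Repr.arbitrary k _
  have hL : boxt g (conv (sc A f) h) (x ⊗ₜ[k] y)
      = theta3 f g h (treeR rx rxR ⊗ₜ[k] treeR ry ryR) := by
    rw [treeR, treeR, map_sum2_tmul_sum2, boxt_tmul _ _ rx ry]
    refine Finset.sum_congr rfl fun i _ => Finset.sum_congr rfl fun j _ => ?_
    rw [conv_tmul (sc A f) h (rxR i) (ryR j), tmul_sum]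
    refine Finset.sum_congr rfl fun a _ => ?_
    rw [tmul_sum]
    refine Finset.sum_congr rfl fun b _ => ?_
    rw [theta3_tmul, sc_apply, ← Algebra.smul_def]
  have hR : boxt (conv g (sc A f)) h (x ⊗ₜ[k] y)
      = theta3 f g h (treeL rx rxL ⊗ₜ[k] treeL ry ryL) := by
    rw [treeL, treeL, map_sum2_tmul_sum2, boxt_tmul _ _ rx ry]
    refine Finset.sum_congr rfl fun i _ => Finset.sum_congr rfl fun j _ => ?_
    rw [conv_tmul g (sc A f) (rxL i) (ryL j), sum_tmul]
    refine Finset.sum_congr rfl fun a _ => ?_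
    rw [sum_tmul]
    refine Finset.sum_congr rfl fun b _ => ?_
    rw [theta3_tmul, sc_apply, ← Algebra.commutes, ← Algebra.smul_def, smul_tmul]
  rw [hL, hR, treeL_eq_treeR rx rxL rxR, treeL_eq_treeR ry ryL ryR]
end Slides

section AlgComp
variable {B B' : Type*} [Ring B] [Algebra k B] [Ring B'] [Algebra k B']

lemma algHom_comp_conv (φ : B →ₐ[k] B') (f g : A ⊗[k] A →ₗ[k] B) :
    φ.toLinearMap ∘ₗ conv f g = conv (φ.toLinearMap ∘ₗ f) (φ.toLinearMap ∘ₗ g) := by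
  apply _root_.TensorProduct.ext'
  intro x y
  have rx := Coalgebra.Repr.arbitrary k x
  have ry := Coalgebra.Repr.arbitrary k y
  simp only [LinearMap.coe_comp, Function.comp_apply, AlgHom.toLinearMap_apply,
    conv_tmul _ _ rx ry, map_sum, map_mul]

lemma algHom_comp_sc (φ : B →ₐ[k] B') (f : A ⊗[k] A →ₗ[k] k) :
    φ.toLinearMap ∘ₗ sc B f = sc B' f := by
  apply LinearMap.ext
  intro z
  simp [sc, AlgHom.commutes]

lemma comulAlgHom_toLinearMap :
    (Bialgebra.comulAlgHom k A).toLinearMap = Coalgebra.comul (R := k) := rfl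

lemma comul_comp_mul' :
    Coalgebra.comul (R := k) ∘ₗ LinearMap.mul' k A
      = boxt (LinearMap.mul' k A) (LinearMap.mul' k A) := by
  apply _root_.TensorProduct.ext'
  intro x y
  have rx := Coalgebra.Repr.arbitrary k x
  have ry := Coalgebra.Repr.arbitrary k y
  rw [LinearMap.coe_comp, Function.comp_apply, LinearMap.mul'_apply,
    boxt_tmul _ _ rx ry, Bialgebra.comul_mul, ← rx.eq, ← ry.eq, Finset.sum_mul_sum]
  simp only [Algebra.TensorProduct.tmul_mul_tmul, LinearMap.mul'_apply]

end AlgComp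

section Translate

lemma cocycleProduct_lift {σ σ' : A →ₗ[k] A →ₗ[k] k} {m : A →ₗ[k] A →ₗ[k] A}
    (hm : IsCocycleProduct.{u} k A σ σ' m) :
    _root_.TensorProduct.lift m = conv (sc A (_root_.TensorProduct.lift σ))
      (conv (LinearMap.mul' k A) (sc A (_root_.TensorProduct.lift σ'))) := by
  apply _root_.TensorProduct.ext'
  intro x y
  have rx := uRepr.{u} (Coalgebra.Repr.arbitrary k x)
  have ry := uRepr.{u} (Coalgebra.Repr.arbitrary k y)
  have rxR :=
    fun i => uRepr.{u} (Coalgebra.Repr.arbitrary k (rx.right i))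
  have ryR :=
    fun j => uRepr.{u} (Coalgebra.Repr.arbitrary k (ry.right j))
  rw [_root_.TensorProduct.lift.tmul, hm x y _ rx _ rxR _ ry _ ryR, conv_tmul _ _ rx ry]
  refine Finset.sum_congr rfl fun i _ => Finset.sum_congr rfl fun j _ => ?_
  rw [conv_tmul _ _ (rxR i) (ryR j), Finset.mul_sum]
  refine Finset.sum_congr rfl fun a _ => ?_
  rw [Finset.mul_sum]
  refine Finset.sum_congr rfl fun b _ => ?_
  simp only [sc_apply, _root_.TensorProduct.lift.tmul, LinearMap.mul'_apply]
  rw [← Algebra.commutes, ← Algebra.smul_def, ← Algebra.smul_def, smul_smul]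

lemma convInverse_conv {σ σ' : A →ₗ[k] A →ₗ[k] k}
    (hinv : IsConvInverse.{u} k A σ σ') :
    conv (sc A (_root_.TensorProduct.lift σ')) (sc A (_root_.TensorProduct.lift σ)) = sc A epsC := by
  apply _root_.TensorProduct.ext'
  intro x y
  have rx := uRepr.{u} (Coalgebra.Repr.arbitrary k x)
  have ry := uRepr.{u} (Coalgebra.Repr.arbitrary k y)
  rw [conv_tmul _ _ rx ry]
  simp only [sc_apply, _root_.TensorProduct.lift.tmul, ← map_mul, ← map_sum, epsC_tmul]
  exact congrArg (algebraMap k A) (hinv x y _ rx _ ry).2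

end Translate

section Main

lemma boxt_eq (p r q q' : A ⊗[k] A →ₗ[k] k)
    (hq : conv (sc A r) (sc A q) = sc A epsC) :
    boxt (conv (sc A p) (conv (LinearMap.mul' k A) (sc A r)))
         (conv (sc A q) (conv (LinearMap.mul' k A) (sc A q')))
      = conv (sc (A ⊗[k] A) p)
          (conv (boxt (LinearMap.mul' k A) (LinearMap.mul' k A)) (sc (A ⊗[k] A) q')) := by
  calc boxt (conv (sc A p) (conv (LinearMap.mul' k A) (sc A r)))
         (conv (sc A q) (conv (LinearMap.mul' k A) (sc A q')))
      = boxt (conv (conv (sc A p) (conv (LinearMap.mul' k A) (sc A r))) (sc A q))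
          (conv (LinearMap.mul' k A) (sc A q')) := slide_L3 q _ _
    _ = boxt (conv (sc A p) (LinearMap.mul' k A)) (conv (LinearMap.mul' k A) (sc A q')) := by
        rw [conv_assoc (sc A p) (conv (LinearMap.mul' k A) (sc A r)) (sc A q),
          conv_assoc (LinearMap.mul' k A) (sc A r) (sc A q), hq, conv_counit_right]
    _ = conv (sc (A ⊗[k] A) p) (boxt (LinearMap.mul' k A) (conv (LinearMap.mul' k A) (sc A q'))) :=
        slide_L1 p _ _
    _ = conv (sc (A ⊗[k] A) p)
          (conv (boxt (LinearMap.mul' k A) (LinearMap.mul' k A)) (sc (A ⊗[k] A) q')) := by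
        rw [slide_L2]

lemma comul_comp_P (p q' : A ⊗[k] A →ₗ[k] k) :
    Coalgebra.comul (R := k) ∘ₗ conv (sc A p) (conv (LinearMap.mul' k A) (sc A q'))
      = conv (sc (A ⊗[k] A) p)
          (conv (boxt (LinearMap.mul' k A) (LinearMap.mul' k A)) (sc (A ⊗[k] A) q')) := by
  have h1 := algHom_comp_conv (Bialgebra.comulAlgHom k A) (sc A p)
    (conv (LinearMap.mul' k A) (sc A q'))
  have h2 := algHom_comp_conv (Bialgebra.comulAlgHom k A) (LinearMap.mul' k A) (sc A q')
  rw [comulAlgHom_toLinearMap] at h1 h2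
  have h3 : Coalgebra.comul (R := k) ∘ₗ sc A p = sc (A ⊗[k] A) p := by
    rw [← comulAlgHom_toLinearMap]; exact algHom_comp_sc _ _
  have h4 : Coalgebra.comul (R := k) ∘ₗ sc A q' = sc (A ⊗[k] A) q' := by
    rw [← comulAlgHom_toLinearMap]; exact algHom_comp_sc _ _
  rw [h1, h2, h3, h4, comul_comp_mul']
end Main

end CocycleAux

open CocycleAux

/-- `Δ : H(σ,τ) → H(σ,τ) ⊗ H(τ,τ)` and `Δ : H(σ,τ) → H(σ,σ) ⊗ H(σ,τ)` are
algebra homomorphisms (multiplicative and unital). -/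
theorem comul_is_algebra_hom_cocycle_algebras (σ σ' τ τ' : H →ₗ[k] H →ₗ[k] k)
    (hσ : IsRightCocycle.{u} k H σ) (hσu : IsUnitalCocycle k H σ)
    (hσinv : IsConvInverse.{u} k H σ σ')
    (hτ : IsRightCocycle.{u} k H τ) (hτu : IsUnitalCocycle k H τ)
    (hτinv : IsConvInverse.{u} k H τ τ')
    (mστ mττ mσσ : H →ₗ[k] H →ₗ[k] H)
    (hστ : IsCocycleProduct.{u} k H σ τ' mστ)
    (hττ : IsCocycleProduct.{u} k H τ τ' mττ)
    (hσσ : IsCocycleProduct.{u} k H σ σ' mσσ) :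
    (∀ (h g : H) (ιh : Type u) (rh : Coalgebra.Repr k h ιh) (ιg : Type u)
        (rg : Coalgebra.Repr k g ιg),
      Coalgebra.comul (R := k) (mστ h g)
        = ∑ i ∈ rh.index, ∑ j ∈ rg.index,
            mστ (rh.left i) (rg.left j) ⊗ₜ[k] mττ (rh.right i) (rg.right j))
    ∧ (∀ (h g : H) (ιh : Type u) (rh : Coalgebra.Repr k h ιh) (ιg : Type u)
        (rg : Coalgebra.Repr k g ιg),
      Coalgebra.comul (R := k) (mστ h g)
        = ∑ i ∈ rh.index, ∑ j ∈ rg.index,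
            mσσ (rh.left i) (rg.left j) ⊗ₜ[k] mστ (rh.right i) (rg.right j))
    ∧ Coalgebra.comul (R := k) (1 : H) = (1 : H) ⊗ₜ[k] (1 : H) := by
  have e1 := cocycleProduct_lift hστ
  have e2 := cocycleProduct_lift hττ
  have e3 := cocycleProduct_lift hσσ
  have hτq := convInverse_conv hτinv
  have hσq := convInverse_conv hσinv
  have key1 : Coalgebra.comul (R := k) ∘ₗ _root_.TensorProduct.lift mστ
      = boxt (_root_.TensorProduct.lift mστ) (_root_.TensorProduct.lift mττ) := by
    rw [e1, e2, comul_comp_P,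
      boxt_eq (_root_.TensorProduct.lift σ) (_root_.TensorProduct.lift τ') (_root_.TensorProduct.lift τ)
        (_root_.TensorProduct.lift τ') hτq]
  have key2 : Coalgebra.comul (R := k) ∘ₗ _root_.TensorProduct.lift mστ
      = boxt (_root_.TensorProduct.lift mσσ) (_root_.TensorProduct.lift mστ) := by
    rw [e1, e3, comul_comp_P,
      boxt_eq (_root_.TensorProduct.lift σ) (_root_.TensorProduct.lift σ') (_root_.TensorProduct.lift σ)
        (_root_.TensorProduct.lift τ') hσq]
  refine ⟨?_, ?_, ?_⟩
  · intro h g ιh rh ιg rg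
    have hh := LinearMap.congr_fun key1 (h ⊗ₜ[k] g)
    rw [boxt_tmul _ _ rh rg] at hh
    simpa only [LinearMap.coe_comp, Function.comp_apply, _root_.TensorProduct.lift.tmul] using hh
  · intro h g ιh rh ιg rg
    have hh := LinearMap.congr_fun key2 (h ⊗ₜ[k] g)
    rw [boxt_tmul _ _ rh rg] at hh
    simpa only [LinearMap.coe_comp, Function.comp_apply, _root_.TensorProduct.lift.tmul] using hh
  · rw [Bialgebra.comul_one, Algebra.TensorProduct.one_def]
end

section
/- Let H be a Hopf algebra and A a left H-module algebra. Then A⊗A (= A^e) is an (A#H)-bimodule with actions (a#h)·(x⊗y) = a(h·x)⊗y and (x⊗y)·(b#g) = x ⊗ (S⁻¹g)·(yb). -/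
open Coalgebra TensorProduct
universe v
section Helpers
variable {k : Type*} [CommRing k]
variable {H : Type*} [AddCommGroup H] [Module k H] [Coalgebra k H]
variable {M : Type*} [AddCommGroup M] [Module k M]

noncomputable def lift3 (F : H →ₗ[k] H →ₗ[k] H →ₗ[k] M) : H ⊗[k] (H ⊗[k] H) →ₗ[k] M :=
  TensorProduct.lift ((TensorProduct.lift.equiv (RingHom.id k) H H M).toLinearMap ∘ₗ F)

@[simp] lemma lift3_tmul (F : H →ₗ[k] H →ₗ[k] H →ₗ[k] M) (x y z : H) :
    lift3 F (x ⊗ₜ (y ⊗ₜ z)) = F x y z := rfl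

lemma sum3 (F : H →ₗ[k] H →ₗ[k] H →ₗ[k] M) {h : H} {ι_r : Type*} (r : Coalgebra.Repr k h ι_r)
    {κ Λ : Type*} (r1 : ∀ i, Coalgebra.Repr k (r.left i) κ) (r2 : ∀ i, Coalgebra.Repr k (r.right i) Λ) :
    ∑ i ∈ r.index, ∑ j ∈ (r1 i).index, F ((r1 i).left j) ((r1 i).right j) (r.right i)
      = ∑ i ∈ r.index, ∑ m ∈ (r2 i).index, F (r.left i) ((r2 i).left m) ((r2 i).right m) := by
  have h3 := Coalgebra.sum_tmul_tmul_eq r r1 r2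
  have h4 := congrArg (lift3 F) h3
  simpa [map_sum] using h4

lemma counit_collapse_left (f : H →ₗ[k] M) {h : H} {ι_r : Type*} (r : Coalgebra.Repr k h ι_r) :
    ∑ i ∈ r.index, counit (R := k) (r.left i) • f (r.right i) = f h := by
  have h1 := Coalgebra.sum_counit_tmul_eq r
  have h2 := congrArg (TensorProduct.lift ((LinearMap.lsmul k M).compl₂ f)) h1
  simp only [map_sum, TensorProduct.lift.tmul, LinearMap.compl₂_apply, LinearMap.lsmul_apply,
    one_smul] at h2
  exact h2

lemma counit_collapse_right (f : H →ₗ[k] M) {h : H} {ι_r : Type*} (r : Coalgebra.Repr k h ι_r) :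
    ∑ i ∈ r.index, counit (R := k) (r.right i) • f (r.left i) = f h := by
  have h1 := Coalgebra.sum_tmul_counit_eq r
  have h2 := congrArg (TensorProduct.lift (((LinearMap.lsmul k M).compl₂ f).flip)) h1
  simp only [map_sum, TensorProduct.lift.tmul, LinearMap.flip_apply, LinearMap.compl₂_apply,
    LinearMap.lsmul_apply, one_smul] at h2
  exact h2

end Helpers

set_option linter.unusedSectionVars false

section URepr
variable {k : Type*} [CommRing k]
variable {H : Type*} [AddCommGroup H] [Module k H] [Coalgebra k H]

/-- auxiliary reindexing of a finitely-indexed family along `ULift ℕ`. -/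
noncomputable def uFun {h : H} {ι_r : Type*} (r : Coalgebra.Repr k h ι_r) (f : ι_r → H) : ULift.{v} ℕ → H :=
  fun m => if hm : m.down < r.index.card then f (r.index.equivFin.symm ⟨m.down, hm⟩) else 0

noncomputable def uIndex {h : H} {ι_r : Type*} (r : Coalgebra.Repr k h ι_r) : Finset (ULift.{v} ℕ) :=
  Finset.univ.map ⟨fun p : Fin r.index.card => ULift.up p.val,
    fun p q hpq => Fin.val_injective (congrArg ULift.down hpq)⟩

lemma uSum {N : Type*} [AddCommMonoid N] {h : H} {ι_r : Type*} (r : Coalgebra.Repr k h ι_r)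
    (F : H → H → N) :
    ∑ i ∈ uIndex.{v} r, F (uFun.{v} r r.left i) (uFun.{v} r r.right i)
      = ∑ i ∈ r.index, F (r.left i) (r.right i) := by
  rw [uIndex, Finset.sum_map]
  show ∑ x : Fin r.index.card, F (uFun.{v} r r.left (ULift.up x.val)) (uFun.{v} r r.right (ULift.up x.val)) = _
  simp only [uFun, Fin.is_lt, dif_pos, Fin.eta]
  rw [Equiv.sum_comp r.index.equivFin.symm
    (fun x : {x // x ∈ r.index} => F (r.left x) (r.right x))]
  rw [← Finset.sum_attach r.index fun x => F (r.left x) (r.right x),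
    Finset.attach_eq_univ]

/-- Reindex a representation so that its index type lives in universe `u`. -/
noncomputable def uliftRepr {h : H} {ι_r : Type*} (r : Coalgebra.Repr k h ι_r) : Coalgebra.Repr k h (ULift.{v} ℕ) where
  index := uIndex.{v} r
  left := uFun.{v} r r.left
  right := uFun.{v} r r.right
  eq := (uSum.{v} r (fun x y => x ⊗ₜ[k] y)).trans r.eq

lemma uliftRepr_sum {N : Type*} [AddCommMonoid N] {h : H} {ι_r : Type*} (r : Coalgebra.Repr k h ι_r)
    (F : H → H → N) :
    ∑ i ∈ (uliftRepr.{v} r).index, F ((uliftRepr.{v} r).left i) ((uliftRepr.{v} r).right i)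
      = ∑ i ∈ r.index, F (r.left i) (r.right i) := uSum.{v} r F

end URepr

section Hopf
variable {k H : Type*} [CommRing k] [Ring H] [HopfAlgebra k H]

local notation "S" => HopfAlgebra.antipode (R := k) (A := H)
local notation "ε" => Coalgebra.counit (R := k)

noncomputable def mulRepr {a b : H} {ι_ra : Type*} (ra : Coalgebra.Repr k a ι_ra) {ι_rb : Type*} (rb : Coalgebra.Repr k b ι_rb) :
    Coalgebra.Repr k (a * b) (ι_ra × ι_rb) where
  index := ra.index ×ˢ rb.index
  left := fun p => ra.left p.1 * rb.left p.2
  right := fun p => ra.right p.1 * rb.right p.2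
  eq := by
    rw [Finset.sum_product, Bialgebra.comul_mul, ← ra.eq, ← rb.eq, Finset.sum_mul_sum]
    simp [Algebra.TensorProduct.tmul_mul_tmul]

lemma S_one : S (1 : H) = 1 := by
  have h1 := HopfAlgebra.mul_antipode_rTensor_comul_apply (R := k) (1 : H)
  rw [Bialgebra.comul_one, Algebra.TensorProduct.one_def] at h1
  simpa using h1

lemma sum_mul_antipode_mul {x y : H} {ι_rx : Type*} (rx : Coalgebra.Repr k x ι_rx) {ι_ry : Type*} (ry : Coalgebra.Repr k y ι_ry) :
    ∑ i ∈ rx.index, ∑ j ∈ ry.index,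
      (rx.left i * ry.left j) * S (rx.right i * ry.right j) = (ε x * ε y) • (1 : H) := by
  have h1 := HopfAlgebra.sum_mul_antipode_eq_smul (R := k) (mulRepr rx ry)
  simp only [mulRepr] at h1
  rw [Finset.sum_product] at h1
  rw [h1, Bialgebra.counit_mul]

lemma sum_antipode2_mul {x y : H} {ι_rx : Type*} (rx : Coalgebra.Repr k x ι_rx) {ι_ry : Type*} (ry : Coalgebra.Repr k y ι_ry) :
    ∑ j ∈ ry.index, ∑ i ∈ rx.index,
      S (ry.left j) * (S (rx.left i) * (rx.right i * ry.right j)) = (ε x * ε y) • (1 : H) := by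
  have step : ∀ j ∈ ry.index,
      ∑ i ∈ rx.index, S (ry.left j) * (S (rx.left i) * (rx.right i * ry.right j))
        = (ε x) • (S (ry.left j) * ry.right j) := by
    intro j _
    rw [← Finset.mul_sum]
    have : ∑ i ∈ rx.index, S (rx.left i) * (rx.right i * ry.right j)
        = (∑ i ∈ rx.index, S (rx.left i) * rx.right i) * ry.right j := by
      rw [Finset.sum_mul]; exact Finset.sum_congr rfl fun i _ => by rw [mul_assoc]
    rw [this, HopfAlgebra.sum_antipode_mul_eq_smul rx, smul_mul_assoc, one_mul, mul_smul_comm]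
  rw [Finset.sum_congr rfl step, ← Finset.smul_sum, HopfAlgebra.sum_antipode_mul_eq_smul ry,
    smul_smul]

noncomputable def Ftri (c1 c2 c3 : H) : H →ₗ[k] H →ₗ[k] H →ₗ[k] H :=
  LinearMap.mk₂ k (fun x1 x2 => LinearMap.mulLeft k (S c1) ∘ₗ LinearMap.mulLeft k (S x1) ∘ₗ
      LinearMap.mulLeft k (x2 * c2) ∘ₗ (S : H →ₗ[k] H) ∘ₗ LinearMap.mulRight k c3)
    (fun m n o => by ext z; simp [mul_add, add_mul, map_add, mul_assoc])
    (fun c m n => by ext z; simp [smul_mul_assoc, mul_smul_comm, map_smul, mul_assoc])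
    (fun m n o => by ext z; simp [mul_add, add_mul, map_add, mul_assoc])
    (fun c m n => by ext z; simp [smul_mul_assoc, mul_smul_comm, map_smul, mul_assoc])

@[simp] lemma Ftri_apply (c1 c2 c3 x1 x2 x3 : H) :
    Ftri (k := k) c1 c2 c3 x1 x2 x3 = S c1 * (S x1 * ((x2 * c2) * S (x3 * c3))) := rfl

noncomputable def Gtri (d1 d2 d3 : H) : H →ₗ[k] H →ₗ[k] H →ₗ[k] H :=
  LinearMap.mk₂ k (fun y1 y2 => LinearMap.mulLeft k (S y1) ∘ₗ LinearMap.mulLeft k (S d1) ∘ₗ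
      LinearMap.mulLeft k (d2 * y2) ∘ₗ (S : H →ₗ[k] H) ∘ₗ LinearMap.mulLeft k d3)
    (fun m n o => by ext z; simp [mul_add, add_mul, map_add, mul_assoc])
    (fun c m n => by ext z; simp [smul_mul_assoc, mul_smul_comm, map_smul, mul_assoc])
    (fun m n o => by ext z; simp [mul_add, add_mul, map_add, mul_assoc])
    (fun c m n => by ext z; simp [smul_mul_assoc, mul_smul_comm, map_smul, mul_assoc])

@[simp] lemma Gtri_apply (d1 d2 d3 y1 y2 y3 : H) :
    Gtri (k := k) d1 d2 d3 y1 y2 y3 = S y1 * (S d1 * ((d2 * y2) * S (d3 * y3))) := rfl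

private lemma smul_term {c d : k} {u v : H} :
    (c • u) * (d • v) = u * (v * ((d * c) • (1 : H))) := by
  simp only [smul_mul_assoc, mul_smul_comm, smul_smul, mul_one]


lemma antipode_mul (a b : H) : S (a * b) = S b * S a := by
  classical
  have ra := ℛ k a
  have rb := ℛ k b
  have ra1 : ∀ i, Coalgebra.Repr k (ra.left i) (H × H) := fun i => ℛ k _
  have ra2 : ∀ i, Coalgebra.Repr k (ra.right i) (H × H) := fun i => ℛ k _
  have rb1 : ∀ j, Coalgebra.Repr k (rb.left j) (H × H) := fun j => ℛ k _
  have rb2 : ∀ j, Coalgebra.Repr k (rb.right j) (H × H) := fun j => ℛ k _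
  have main : S b * S a = S (a * b) := by
    calc S b * S a
        = (∑ j ∈ rb.index, ε (rb.right j) • S (rb.left j))
            * (∑ i ∈ ra.index, ε (ra.right i) • S (ra.left i)) := by
          rw [counit_collapse_right _ rb, counit_collapse_right _ ra]
      _ = ∑ j ∈ rb.index, ∑ i ∈ ra.index,
            S (rb.left j) * (S (ra.left i) * ((ε (ra.right i) * ε (rb.right j)) • (1:H))) := by
          rw [Finset.sum_mul_sum]
          exact Finset.sum_congr rfl fun j _ => Finset.sum_congr rfl fun i _ => smul_term
      _ = ∑ j ∈ rb.index, ∑ i ∈ ra.index,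
            S (rb.left j) * (S (ra.left i) *
              (∑ p ∈ (ra2 i).index, ∑ q ∈ (rb2 j).index,
                ((ra2 i).left p * (rb2 j).left q) * S ((ra2 i).right p * (rb2 j).right q))) :=
          Finset.sum_congr rfl fun j _ => Finset.sum_congr rfl fun i _ => by
            rw [sum_mul_antipode_mul (ra2 i) (rb2 j)]
      _ = ∑ j ∈ rb.index, ∑ i ∈ ra.index, ∑ p ∈ (ra2 i).index, ∑ q ∈ (rb2 j).index,
            Ftri (k := k) (rb.left j) ((rb2 j).left q) ((rb2 j).right q)
              (ra.left i) ((ra2 i).left p) ((ra2 i).right p) := by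
          simp only [Finset.mul_sum, Ftri_apply]
      _ = ∑ j ∈ rb.index, ∑ i ∈ ra.index, ∑ q ∈ (rb2 j).index, ∑ p ∈ (ra2 i).index,
            Ftri (k := k) (rb.left j) ((rb2 j).left q) ((rb2 j).right q)
              (ra.left i) ((ra2 i).left p) ((ra2 i).right p) :=
          Finset.sum_congr rfl fun j _ => Finset.sum_congr rfl fun i _ =>
            Finset.sum_comm
      _ = ∑ j ∈ rb.index, ∑ q ∈ (rb2 j).index, ∑ i ∈ ra.index, ∑ p ∈ (ra2 i).index,
            Ftri (k := k) (rb.left j) ((rb2 j).left q) ((rb2 j).right q)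
              (ra.left i) ((ra2 i).left p) ((ra2 i).right p) :=
          Finset.sum_congr rfl fun j _ => Finset.sum_comm
      _ = ∑ j ∈ rb.index, ∑ q ∈ (rb2 j).index, ∑ i ∈ ra.index, ∑ p ∈ (ra1 i).index,
            Ftri (k := k) (rb.left j) ((rb2 j).left q) ((rb2 j).right q)
              ((ra1 i).left p) ((ra1 i).right p) (ra.right i) :=
          Finset.sum_congr rfl fun j _ => Finset.sum_congr rfl fun q _ =>
            (sum3 _ ra ra1 ra2).symm
      _ = ∑ j ∈ rb.index, ∑ q ∈ (rb2 j).index, ∑ i ∈ ra.index, ∑ p ∈ (ra1 i).index,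
            Gtri (k := k) ((ra1 i).left p) ((ra1 i).right p) (ra.right i)
              (rb.left j) ((rb2 j).left q) ((rb2 j).right q) := by
          simp only [Ftri_apply, Gtri_apply]
      _ = ∑ j ∈ rb.index, ∑ i ∈ ra.index, ∑ q ∈ (rb2 j).index, ∑ p ∈ (ra1 i).index,
            Gtri (k := k) ((ra1 i).left p) ((ra1 i).right p) (ra.right i)
              (rb.left j) ((rb2 j).left q) ((rb2 j).right q) :=
          Finset.sum_congr rfl fun j _ => Finset.sum_comm
      _ = ∑ j ∈ rb.index, ∑ i ∈ ra.index, ∑ p ∈ (ra1 i).index, ∑ q ∈ (rb2 j).index,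
            Gtri (k := k) ((ra1 i).left p) ((ra1 i).right p) (ra.right i)
              (rb.left j) ((rb2 j).left q) ((rb2 j).right q) :=
          Finset.sum_congr rfl fun j _ => Finset.sum_congr rfl fun i _ =>
            Finset.sum_comm
      _ = ∑ i ∈ ra.index, ∑ j ∈ rb.index, ∑ p ∈ (ra1 i).index, ∑ q ∈ (rb2 j).index,
            Gtri (k := k) ((ra1 i).left p) ((ra1 i).right p) (ra.right i)
              (rb.left j) ((rb2 j).left q) ((rb2 j).right q) :=
          Finset.sum_comm
      _ = ∑ i ∈ ra.index, ∑ p ∈ (ra1 i).index, ∑ j ∈ rb.index, ∑ q ∈ (rb2 j).index,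
            Gtri (k := k) ((ra1 i).left p) ((ra1 i).right p) (ra.right i)
              (rb.left j) ((rb2 j).left q) ((rb2 j).right q) :=
          Finset.sum_congr rfl fun i _ => Finset.sum_comm
      _ = ∑ i ∈ ra.index, ∑ p ∈ (ra1 i).index, ∑ j ∈ rb.index, ∑ q ∈ (rb1 j).index,
            Gtri (k := k) ((ra1 i).left p) ((ra1 i).right p) (ra.right i)
              ((rb1 j).left q) ((rb1 j).right q) (rb.right j) :=
          Finset.sum_congr rfl fun i _ => Finset.sum_congr rfl fun p _ =>
            (sum3 _ rb rb1 rb2).symm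
      _ = ∑ i ∈ ra.index, ∑ j ∈ rb.index, ∑ p ∈ (ra1 i).index, ∑ q ∈ (rb1 j).index,
            Gtri (k := k) ((ra1 i).left p) ((ra1 i).right p) (ra.right i)
              ((rb1 j).left q) ((rb1 j).right q) (rb.right j) :=
          Finset.sum_congr rfl fun i _ => Finset.sum_comm
      _ = ∑ i ∈ ra.index, ∑ j ∈ rb.index, ∑ q ∈ (rb1 j).index, ∑ p ∈ (ra1 i).index,
            Gtri (k := k) ((ra1 i).left p) ((ra1 i).right p) (ra.right i)
              ((rb1 j).left q) ((rb1 j).right q) (rb.right j) :=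
          Finset.sum_congr rfl fun i _ => Finset.sum_congr rfl fun j _ =>
            Finset.sum_comm
      _ = ∑ i ∈ ra.index, ∑ j ∈ rb.index,
            (ε (ra.left i) * ε (rb.left j)) • S (ra.right i * rb.right j) :=
          Finset.sum_congr rfl fun i _ => Finset.sum_congr rfl fun j _ => by
            have assoc_step : ∀ q ∈ (rb1 j).index, ∀ p ∈ (ra1 i).index,
                Gtri (k := k) ((ra1 i).left p) ((ra1 i).right p) (ra.right i)
                  ((rb1 j).left q) ((rb1 j).right q) (rb.right j)
                = (S ((rb1 j).left q) * (S ((ra1 i).left p) *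
                    ((ra1 i).right p * (rb1 j).right q))) * S (ra.right i * rb.right j) := by
              intro q _ p _
              rw [Gtri_apply]
              simp only [mul_assoc]
            calc ∑ q ∈ (rb1 j).index, ∑ p ∈ (ra1 i).index,
                  Gtri (k := k) ((ra1 i).left p) ((ra1 i).right p) (ra.right i)
                    ((rb1 j).left q) ((rb1 j).right q) (rb.right j)
                = (∑ q ∈ (rb1 j).index, ∑ p ∈ (ra1 i).index,
                    S ((rb1 j).left q) * (S ((ra1 i).left p) *
                      ((ra1 i).right p * (rb1 j).right q))) * S (ra.right i * rb.right j) := by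
                  rw [Finset.sum_mul]
                  exact Finset.sum_congr rfl fun q hq => by
                    rw [Finset.sum_mul]
                    exact Finset.sum_congr rfl fun p hp => assoc_step q hq p hp
              _ = (ε (ra.left i) * ε (rb.left j)) • S (ra.right i * rb.right j) := by
                  rw [sum_antipode2_mul (ra1 i) (rb1 j), smul_mul_assoc, one_mul]
      _ = S (a * b) := by
          have inner : ∀ i ∈ ra.index,
              ∑ j ∈ rb.index, (ε (ra.left i) * ε (rb.left j)) • S (ra.right i * rb.right j)
                = ε (ra.left i) • S (ra.right i * b) := by
            intro i _
            have hcol := counit_collapse_left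
              ((S : H →ₗ[k] H) ∘ₗ LinearMap.mulLeft k (ra.right i)) rb
            simp only [LinearMap.comp_apply, LinearMap.mulLeft_apply] at hcol
            rw [← hcol, Finset.smul_sum]
            exact Finset.sum_congr rfl fun j _ => by rw [mul_smul]
          rw [Finset.sum_congr rfl inner]
          have hcol2 := counit_collapse_left
            ((S : H →ₗ[k] H) ∘ₗ LinearMap.mulRight k b) ra
          simp only [LinearMap.comp_apply, LinearMap.mulRight_apply] at hcol2
          rw [hcol2]
  exact main.symm

noncomputable def rho : H →ₗ[k] H ⊗[k] H :=
  (TensorProduct.comm k H H).toLinearMap ∘ₗ TensorProduct.map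
    (HopfAlgebra.antipode (R := k)) (HopfAlgebra.antipode (R := k)) ∘ₗ Coalgebra.comul

lemma rho_repr {h : H} {ι_r : Type*} (r : Coalgebra.Repr k h ι_r) :
    rho (k := k) h = ∑ i ∈ r.index, S (r.right i) ⊗ₜ[k] S (r.left i) := by
  have h1 := congrArg ((TensorProduct.comm k H H).toLinearMap ∘ₗ TensorProduct.map
    (HopfAlgebra.antipode (R := k) (A := H)) (HopfAlgebra.antipode (R := k))) r.eq
  simp only [map_sum, LinearMap.comp_apply, TensorProduct.map_tmul,
    LinearEquiv.coe_coe, TensorProduct.comm_tmul] at h1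
  exact h1.symm

noncomputable def Ptri : H →ₗ[k] H →ₗ[k] H →ₗ[k] (H ⊗[k] H) :=
  LinearMap.mk₂ k (fun x y =>
      LinearMap.mulLeft k (S y ⊗ₜ[k] S x) ∘ₗ (Coalgebra.comul (R := k)))
    (fun m n o => by ext z; simp [tmul_add, add_tmul, mul_add, add_mul, map_add])
    (fun c m n => by
      ext z
      simp only [LinearMap.comp_apply, LinearMap.mulLeft_apply, LinearMap.smul_apply,
        map_smul, TensorProduct.tmul_smul, ← TensorProduct.smul_tmul', smul_mul_assoc])
    (fun m n o => by ext z; simp [tmul_add, add_tmul, mul_add, add_mul, map_add])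
    (fun c m n => by
      ext z
      simp only [LinearMap.comp_apply, LinearMap.mulLeft_apply, LinearMap.smul_apply,
        map_smul, TensorProduct.tmul_smul, ← TensorProduct.smul_tmul', smul_mul_assoc])

@[simp] lemma Ptri_apply (x y z : H) :
    Ptri (k := k) x y z = (S y ⊗ₜ[k] S x) * Coalgebra.comul (R := k) z := rfl

noncomputable def Qtri (c : H) : H →ₗ[k] H →ₗ[k] H →ₗ[k] (H ⊗[k] H) :=
  LinearMap.mk₂ k (fun u v =>
      TensorProduct.mk k H H (S u * v) ∘ₗ LinearMap.mulLeft k (S c))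
    (fun m n o => by ext z; simp [add_mul, mul_add, add_tmul, tmul_add, map_add])
    (fun c' m n => by ext z; simp [smul_mul_assoc, smul_tmul', map_smul])
    (fun m n o => by ext z; simp [add_mul, mul_add, add_tmul, tmul_add, map_add])
    (fun c' m n => by ext z; simp [smul_mul_assoc, mul_smul_comm, smul_tmul', map_smul])

@[simp] lemma Qtri_apply (c u v w : H) :
    Qtri (k := k) c u v w = (S u * v) ⊗ₜ[k] (S c * w) := rfl

noncomputable def Rtri : H →ₗ[k] H →ₗ[k] H →ₗ[k] (H ⊗[k] H) :=
  LinearMap.mk₂ k (fun x y =>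
      LinearMap.mulLeft k (rho (k := k) x) ∘ₗ LinearMap.mulLeft k (Coalgebra.comul (R := k) y)
        ∘ₗ (Coalgebra.comul (R := k)) ∘ₗ (HopfAlgebra.antipode (R := k)))
    (fun m n o => by ext z; simp [map_add, add_mul, mul_add])
    (fun c m n => by ext z; simp [map_smul, smul_mul_assoc, mul_smul_comm])
    (fun m n o => by ext z; simp [map_add, add_mul, mul_add])
    (fun c m n => by ext z; simp [map_smul, smul_mul_assoc, mul_smul_comm])

@[simp] lemma Rtri_apply (x y z : H) :
    Rtri (k := k) x y z
      = rho (k := k) x * (Coalgebra.comul (R := k) y * Coalgebra.comul (R := k) (S z)) := rfl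

lemma rho_conv (x : H) {ι_rx : Type*} (rx : Coalgebra.Repr k x ι_rx) :
    ∑ j ∈ rx.index, rho (k := k) (rx.left j) * Coalgebra.comul (R := k) (rx.right j)
      = ε x • (1 : H ⊗[k] H) := by
  classical
  have rx1 : ∀ j, Coalgebra.Repr k (rx.left j) (H × H) := fun j => ℛ k _
  have rx2 : ∀ j, Coalgebra.Repr k (rx.right j) (H × H) := fun j => ℛ k _
  have rx21 : ∀ j m, Coalgebra.Repr k ((rx2 j).left m) (H × H) := fun j m => ℛ k _
  have rx22 : ∀ j m, Coalgebra.Repr k ((rx2 j).right m) (H × H) := fun j m => ℛ k _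
  calc ∑ j ∈ rx.index, rho (k := k) (rx.left j) * Coalgebra.comul (R := k) (rx.right j)
      = ∑ j ∈ rx.index, ∑ p ∈ (rx1 j).index,
          Ptri (k := k) ((rx1 j).left p) ((rx1 j).right p) (rx.right j) :=
        Finset.sum_congr rfl fun j _ => by
          rw [rho_repr (rx1 j), Finset.sum_mul]
          exact Finset.sum_congr rfl fun p _ => by rw [Ptri_apply]
    _ = ∑ j ∈ rx.index, ∑ m ∈ (rx2 j).index,
          Ptri (k := k) (rx.left j) ((rx2 j).left m) ((rx2 j).right m) :=
        sum3 _ rx rx1 rx2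
    _ = ∑ j ∈ rx.index, ∑ m ∈ (rx2 j).index, ∑ n ∈ (rx22 j m).index,
          Qtri (k := k) (rx.left j) ((rx2 j).left m) ((rx22 j m).left n)
            ((rx22 j m).right n) :=
        Finset.sum_congr rfl fun j _ => Finset.sum_congr rfl fun m _ => by
          rw [Ptri_apply, ← (rx22 j m).eq, Finset.mul_sum]
          exact Finset.sum_congr rfl fun n _ => by
            rw [Algebra.TensorProduct.tmul_mul_tmul, Qtri_apply]
    _ = ∑ j ∈ rx.index, ∑ m ∈ (rx2 j).index, ∑ n ∈ (rx21 j m).index,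
          Qtri (k := k) (rx.left j) ((rx21 j m).left n) ((rx21 j m).right n)
            ((rx2 j).right m) :=
        Finset.sum_congr rfl fun j _ => (sum3 _ (rx2 j) (rx21 j) (rx22 j)).symm
    _ = ∑ j ∈ rx.index, ∑ m ∈ (rx2 j).index,
          ε ((rx2 j).left m) • ((1 : H) ⊗ₜ[k] (S (rx.left j) * (rx2 j).right m)) :=
        Finset.sum_congr rfl fun j _ => Finset.sum_congr rfl fun m _ => by
          simp only [Qtri_apply]
          rw [← TensorProduct.sum_tmul, HopfAlgebra.sum_antipode_mul_eq_smul (rx21 j m),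
            TensorProduct.smul_tmul']
    _ = ∑ j ∈ rx.index, (1 : H) ⊗ₜ[k] (S (rx.left j) * rx.right j) :=
        Finset.sum_congr rfl fun j _ => by
          have hcol := counit_collapse_left
            ((TensorProduct.mk k H H 1) ∘ₗ LinearMap.mulLeft k (S (rx.left j))) (rx2 j)
          simpa using hcol
    _ = ε x • (1 : H ⊗[k] H) := by
        rw [← TensorProduct.tmul_sum, HopfAlgebra.sum_antipode_mul_eq_smul rx,
          Algebra.TensorProduct.one_def, TensorProduct.tmul_smul]

lemma comul_antipode (h : H) :
    Coalgebra.comul (R := k) (S h) = rho (k := k) h := by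
  classical
  have r := ℛ k h
  have r1 : ∀ i, Coalgebra.Repr k (r.left i) (H × H) := fun i => ℛ k _
  have r2 : ∀ i, Coalgebra.Repr k (r.right i) (H × H) := fun i => ℛ k _
  have main : rho (k := k) h = Coalgebra.comul (R := k) (S h) := by
    calc rho (k := k) h
        = ∑ i ∈ r.index, ε (r.right i) • rho (k := k) (r.left i) :=
          (counit_collapse_right _ r).symm
      _ = ∑ i ∈ r.index, ∑ m ∈ (r2 i).index,
            Rtri (k := k) (r.left i) ((r2 i).left m) ((r2 i).right m) :=
          Finset.sum_congr rfl fun i _ => by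
            have hsm := HopfAlgebra.sum_mul_antipode_eq_smul (R := k) (r2 i)
            have hΔ := congrArg (Coalgebra.comul (R := k)) hsm
            simp only [map_sum, Bialgebra.comul_mul, map_smul, Bialgebra.comul_one] at hΔ
            symm
            simp only [Rtri_apply]
            rw [← Finset.mul_sum, hΔ, mul_smul_comm, mul_one]
      _ = ∑ i ∈ r.index, ∑ p ∈ (r1 i).index,
            Rtri (k := k) ((r1 i).left p) ((r1 i).right p) (r.right i) :=
          (sum3 _ r r1 r2).symm
      _ = ∑ i ∈ r.index, ε (r.left i) • Coalgebra.comul (R := k) (S (r.right i)) :=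
          Finset.sum_congr rfl fun i _ => by
            have factor : ∀ p ∈ (r1 i).index,
                Rtri (k := k) ((r1 i).left p) ((r1 i).right p) (r.right i)
                  = (rho (k := k) ((r1 i).left p) * Coalgebra.comul (R := k) ((r1 i).right p))
                      * Coalgebra.comul (R := k) (S (r.right i)) := by
              intro p _
              rw [Rtri_apply, mul_assoc]
            rw [Finset.sum_congr rfl factor, ← Finset.sum_mul, rho_conv _ (r1 i),
              smul_mul_assoc, one_mul]
      _ = Coalgebra.comul (R := k) (S h) := by
          have hcol := counit_collapse_left
            ((Coalgebra.comul (R := k)) ∘ₗ (HopfAlgebra.antipode (R := k) (A := H))) r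
          simpa using hcol
  exact main.symm

section Sinv
variable (Sinv : H →ₗ[k] H)
variable (hS : ∀ h : H, Sinv (HopfAlgebra.antipode (R := k) h) = h
    ∧ HopfAlgebra.antipode (R := k) (Sinv h) = h)

include hS

lemma S_inj : Function.Injective (S : H →ₗ[k] H) := fun u v huv => by
  have h2 := congrArg Sinv huv
  rwa [(hS u).1, (hS v).1] at h2

lemma Sinv_one : Sinv 1 = 1 := by
  conv_lhs => rw [← S_one (k := k)]
  rw [(hS 1).1]

lemma Sinv_mul (g h' : H) : Sinv (g * h') = Sinv h' * Sinv g := by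
  apply S_inj Sinv hS
  rw [(hS (g * h')).2, antipode_mul, (hS g).2, (hS h').2]

lemma sum_Sinv_mul {x : H} {ι_rx : Type*} (rx : Coalgebra.Repr k x ι_rx) :
    ∑ i ∈ rx.index, Sinv (rx.right i) * rx.left i = ε x • (1 : H) := by
  apply S_inj Sinv hS
  rw [map_sum, map_smul, S_one]
  calc ∑ i ∈ rx.index, S (Sinv (rx.right i) * rx.left i)
      = ∑ i ∈ rx.index, S (rx.left i) * rx.right i :=
        Finset.sum_congr rfl fun i _ => by rw [antipode_mul, (hS (rx.right i)).2]
    _ = ε x • (1 : H) := HopfAlgebra.sum_antipode_mul_eq_smul rx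

lemma comul_Sinv {x : H} {ι_rx : Type*} (rx : Coalgebra.Repr k x ι_rx) :
    Coalgebra.comul (R := k) (Sinv x)
      = ∑ i ∈ rx.index, Sinv (rx.right i) ⊗ₜ[k] Sinv (rx.left i) := by
  classical
  have ry := ℛ k (Sinv x)
  have hca := comul_antipode (k := k) (Sinv x)
  rw [(hS x).2, rho_repr ry] at hca
  -- hca : comul x = ∑ j, S (ry.right j) ⊗ₜ S (ry.left j)
  have happ := congrArg ((TensorProduct.comm k H H).toLinearMap
    ∘ₗ TensorProduct.map Sinv Sinv) hca
  rw [← rx.eq] at happ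
  simp only [map_sum, LinearMap.comp_apply, TensorProduct.map_tmul, LinearEquiv.coe_coe,
    TensorProduct.comm_tmul, (hS _).1] at happ
  rw [ry.eq] at happ
  exact happ.symm

noncomputable def Ktri : H →ₗ[k] H →ₗ[k] H →ₗ[k] (H ⊗[k] H) :=
  LinearMap.mk₂ k (fun x y => ((TensorProduct.mk k H H).flip (Sinv y * x)) ∘ₗ Sinv)
    (fun m n o => by ext w; simp [mul_add, tmul_add, map_add])
    (fun c m n => by ext w; simp [map_smul, mul_smul_comm, tmul_smul])
    (fun m n o => by ext w; simp [add_mul, tmul_add, map_add])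
    (fun c m n => by ext w; simp [map_smul, smul_mul_assoc, tmul_smul])

omit hS in
@[simp] lemma Ktri_apply (x y w : H) :
    Ktri (k := k) Sinv x y w = Sinv w ⊗ₜ[k] (Sinv y * x) := rfl

section Act
variable {A : Type*} [Ring A] [Algebra k A]
variable (act : H →ₗ[k] A →ₗ[k] A)

noncomputable def Bbil (z c : A) : H ⊗[k] H →ₗ[k] A :=
  TensorProduct.lift (LinearMap.mk₂ k (fun x w => act x z * act w c)
    (fun m n o => by simp [map_add, LinearMap.add_apply, add_mul])
    (fun c' m n => by simp [map_smul, LinearMap.smul_apply, smul_mul_assoc])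
    (fun m n o => by simp [map_add, LinearMap.add_apply, mul_add])
    (fun c' m n => by simp [map_smul, LinearMap.smul_apply, mul_smul_comm]))

omit hS in
@[simp] lemma Bbil_tmul (z c : A) (x w : H) :
    Bbil (k := k) act z c (x ⊗ₜ[k] w) = act x z * act w c := rfl

lemma keyK
    (h1 : ∀ a : A, act 1 a = a)
    (h2 : ∀ (g h' : H) (a : A), act (g * h') a = act g (act h' a))
    (h4 : ∀ (h' : H) (a b : A) (ι : Type v) (rr : Coalgebra.Repr k h' ι),
      act h' (a * b) = ∑ i ∈ rr.index, act (rr.left i) a * act (rr.right i) b)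
    (g : H) (z c : A) {ι_r : Type*} (r : Coalgebra.Repr k g ι_r) :
    act (Sinv g) z * c
      = ∑ i ∈ r.index, act (Sinv (r.right i)) (z * act (r.left i) c) := by
  classical
  have t : ∀ i, Coalgebra.Repr k (r.right i) (H × H) := fun i => ℛ k _
  have r1 : ∀ i, Coalgebra.Repr k (r.left i) (H × H) := fun i => ℛ k _
  have hX : ∑ i ∈ r.index, ∑ j ∈ (t i).index,
      Sinv ((t i).right j) ⊗ₜ[k] (Sinv ((t i).left j) * r.left i)
      = Sinv g ⊗ₜ[k] (1 : H) := by
    calc ∑ i ∈ r.index, ∑ j ∈ (t i).index,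
        Sinv ((t i).right j) ⊗ₜ[k] (Sinv ((t i).left j) * r.left i)
        = ∑ i ∈ r.index, ∑ j ∈ (t i).index,
            Ktri (k := k) Sinv (r.left i) ((t i).left j) ((t i).right j) := by
          simp only [Ktri_apply]
      _ = ∑ i ∈ r.index, ∑ j ∈ (r1 i).index,
            Ktri (k := k) Sinv ((r1 i).left j) ((r1 i).right j) (r.right i) :=
          (sum3 _ r r1 t).symm
      _ = ∑ i ∈ r.index, Sinv (r.right i) ⊗ₜ[k] ((ε (r.left i)) • (1 : H)) :=
          Finset.sum_congr rfl fun i _ => by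
            simp only [Ktri_apply]
            rw [← TensorProduct.tmul_sum, sum_Sinv_mul Sinv hS (r1 i)]
      _ = Sinv g ⊗ₜ[k] (1 : H) := by
          have hcol := counit_collapse_left
            (((TensorProduct.mk k H H).flip (1 : H)) ∘ₗ Sinv) r
          simp only [LinearMap.comp_apply, LinearMap.flip_apply, TensorProduct.mk_apply]
            at hcol
          rw [← hcol]
          exact Finset.sum_congr rfl fun i _ => by rw [TensorProduct.tmul_smul]
  have main : ∑ i ∈ r.index, act (Sinv (r.right i)) (z * act (r.left i) c)
      = act (Sinv g) z * c := by
    calc ∑ i ∈ r.index, act (Sinv (r.right i)) (z * act (r.left i) c)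
        = ∑ i ∈ r.index, ∑ j ∈ (t i).index,
            act (Sinv ((t i).right j)) z * act (Sinv ((t i).left j)) (act (r.left i) c) := by
          refine Finset.sum_congr rfl fun i _ => ?_
          let sdef : Coalgebra.Repr k (Sinv (r.right i)) (H × H) :=
            ⟨(t i).index, fun j => Sinv ((t i).right j), fun j => Sinv ((t i).left j),
              (comul_Sinv Sinv hS (t i)).symm⟩
          rw [h4 _ z (act (r.left i) c) _ (uliftRepr.{v} sdef)]
          exact uliftRepr_sum sdef (fun x y => act x z * act y (act (r.left i) c))
      _ = ∑ i ∈ r.index, ∑ j ∈ (t i).index,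
            act (Sinv ((t i).right j)) z * act (Sinv ((t i).left j) * r.left i) c :=
          Finset.sum_congr rfl fun i _ => Finset.sum_congr rfl fun j _ => by
            rw [h2]
      _ = Bbil (k := k) act z c (Sinv g ⊗ₜ[k] (1 : H)) := by
          rw [← hX]
          simp only [map_sum, Bbil_tmul]
      _ = act (Sinv g) z * c := by rw [Bbil_tmul, h1]
  exact main.symm

end Act
end Sinv
end Hopf



/- STATEMENT 13: for a Hopf algebra H (bijective antipode) and a left H-module
algebra A, the space `A ⊗ A` is an `(A#H)`-bimodule with actions
`(a#h)·(x⊗y) = a(h·x)⊗y` and `(x⊗y)·(b#g) = x ⊗ (S⁻¹g)·(yb)`. -/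

open Coalgebra TensorProduct

universe u

variable (k H A : Type*) [Field k] [Ring H] [HopfAlgebra k H]
  [Ring A] [Algebra k A]

def IsModuleAlgebra (act : H →ₗ[k] A →ₗ[k] A) : Prop :=
  (∀ a : A, act 1 a = a)
  ∧ (∀ (g h : H) (a : A), act (g * h) a = act g (act h a))
  ∧ (∀ h : H, act h 1 = Coalgebra.counit (R := k) h • (1 : A))
  ∧ (∀ (h : H) (a b : A) (ι : Type u) (r : Coalgebra.Repr k h ι),
      act h (a * b) = ∑ i ∈ r.index, act (r.left i) a * act (r.right i) b)

/-- `N` is an `(A#H)`-bimodule, encoded by left actions `lN, lHN` of A and H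
(with the smash relation) and right actions `rN, rHN`, all pairwise commuting. -/
def IsSmashBimodule {N : Type*} [AddCommGroup N] [Module k N]
    (act : H →ₗ[k] A →ₗ[k] A)
    (lN rN : A →ₗ[k] N →ₗ[k] N) (lHN rHN : H →ₗ[k] N →ₗ[k] N) : Prop :=
  (∀ n : N, lN 1 n = n) ∧ (∀ (a b : A) (n : N), lN (a * b) n = lN a (lN b n))
  ∧ (∀ n : N, lHN 1 n = n) ∧ (∀ (g h : H) (n : N), lHN (g * h) n = lHN g (lHN h n))
  ∧ (∀ (h : H) (a : A) (n : N) (ι : Type u) (r : Coalgebra.Repr k h ι),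
      lHN h (lN a n) = ∑ i ∈ r.index, lN (act (r.left i) a) (lHN (r.right i) n))
  ∧ (∀ n : N, rN 1 n = n) ∧ (∀ (a b : A) (n : N), rN (a * b) n = rN b (rN a n))
  ∧ (∀ n : N, rHN 1 n = n) ∧ (∀ (g h : H) (n : N), rHN (g * h) n = rHN h (rHN g n))
  ∧ (∀ (h : H) (a : A) (n : N) (ι : Type u) (r : Coalgebra.Repr k h ι),
      rN a (rHN h n) = ∑ i ∈ r.index, rHN (r.right i) (rN (act (r.left i) a) n))
  ∧ (∀ (a b : A) (n : N), lN a (rN b n) = rN b (lN a n))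
  ∧ (∀ (a : A) (h : H) (n : N), lN a (rHN h n) = rHN h (lN a n))
  ∧ (∀ (h : H) (a : A) (n : N), lHN h (rN a n) = rN a (lHN h n))
  ∧ (∀ (g h : H) (n : N), lHN g (rHN h n) = rHN h (lHN g n))

theorem Ae_is_smash_bimodule (act : H →ₗ[k] A →ₗ[k] A)
    (hA : IsModuleAlgebra.{u} k H A act)
    (Sinv : H →ₗ[k] H)
    (hS : ∀ h : H, Sinv (HopfAlgebra.antipode (R := k) h) = h
      ∧ HopfAlgebra.antipode (R := k) (Sinv h) = h) :
    ∃ (lE rE : A →ₗ[k] (A ⊗[k] A) →ₗ[k] (A ⊗[k] A))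
      (lHE rHE : H →ₗ[k] (A ⊗[k] A) →ₗ[k] (A ⊗[k] A)),
      (∀ (a x y : A), lE a (x ⊗ₜ[k] y) = (a * x) ⊗ₜ[k] y)
      ∧ (∀ (h : H) (x y : A), lHE h (x ⊗ₜ[k] y) = act h x ⊗ₜ[k] y)
      ∧ (∀ (b x y : A), rE b (x ⊗ₜ[k] y) = x ⊗ₜ[k] (y * b))
      ∧ (∀ (g : H) (x y : A), rHE g (x ⊗ₜ[k] y) = x ⊗ₜ[k] act (Sinv g) y)
      ∧ IsSmashBimodule.{u} k H A act lE rE lHE rHE := by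
  classical
  obtain ⟨h1, h2, h3, h4⟩ := hA
  refine ⟨(LinearMap.rTensorHom (R := k) A) ∘ₗ (LinearMap.mul k A),
    (LinearMap.lTensorHom (R := k) A) ∘ₗ (LinearMap.mul k A).flip,
    (LinearMap.rTensorHom (R := k) A) ∘ₗ act,
    (LinearMap.lTensorHom (R := k) A) ∘ₗ act ∘ₗ Sinv, ?_, ?_, ?_, ?_, ?_⟩
  · intro a x y; rfl
  · intro h x y; rfl
  · intro b x y; rfl
  · intro g x y; rfl
  have lEt : ∀ (a x y : A),
      ((LinearMap.rTensorHom (R := k) A ∘ₗ LinearMap.mul k A) a) (x ⊗ₜ[k] y)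
        = (a * x) ⊗ₜ[k] y := fun _ _ _ => rfl
  have lHEt : ∀ (h : H) (x y : A),
      ((LinearMap.rTensorHom (R := k) A ∘ₗ act) h) (x ⊗ₜ[k] y) = act h x ⊗ₜ[k] y :=
    fun _ _ _ => rfl
  have rEt : ∀ (b x y : A),
      ((LinearMap.lTensorHom (R := k) A ∘ₗ (LinearMap.mul k A).flip) b) (x ⊗ₜ[k] y)
        = x ⊗ₜ[k] (y * b) := fun _ _ _ => rfl
  have rHEt : ∀ (g : H) (x y : A),
      ((LinearMap.lTensorHom (R := k) A ∘ₗ act ∘ₗ Sinv) g) (x ⊗ₜ[k] y)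
        = x ⊗ₜ[k] act (Sinv g) y := fun _ _ _ => rfl
  refine ⟨?_, ?_, ?_, ?_, ?_, ?_, ?_, ?_, ?_, ?_, ?_, ?_, ?_, ?_⟩
  · intro n
    induction n using TensorProduct.induction_on with
    | zero => simp
    | tmul x y => rw [lEt]; rw [one_mul]
    | add u v hu hv => simp only [map_add, hu, hv]
  · intro a b n
    induction n using TensorProduct.induction_on with
    | zero => simp
    | tmul x y => rw [lEt, lEt, lEt, mul_assoc]
    | add u v hu hv => simp only [map_add, hu, hv]
  · intro n
    induction n using TensorProduct.induction_on with
    | zero => simp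
    | tmul x y => rw [lHEt, h1]
    | add u v hu hv => simp only [map_add, hu, hv]
  · intro g h n
    induction n using TensorProduct.induction_on with
    | zero => simp
    | tmul x y => rw [lHEt, lHEt, lHEt, h2]
    | add u v hu hv => simp only [map_add, hu, hv]
  · intro h a n ι r
    induction n using TensorProduct.induction_on with
    | zero => simp
    | tmul x y =>
      simp only [lEt, lHEt]
      rw [h4 h a x ι r, TensorProduct.sum_tmul]
    | add u v hu hv => simp only [map_add, hu, hv, Finset.sum_add_distrib]
  · intro n
    induction n using TensorProduct.induction_on with
    | zero => simp
    | tmul x y => rw [rEt, mul_one]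
    | add u v hu hv => simp only [map_add, hu, hv]
  · intro a b n
    induction n using TensorProduct.induction_on with
    | zero => simp
    | tmul x y => rw [rEt, rEt, rEt, mul_assoc]
    | add u v hu hv => simp only [map_add, hu, hv]
  · intro n
    induction n using TensorProduct.induction_on with
    | zero => simp
    | tmul x y => rw [rHEt, Sinv_one Sinv hS, h1]
    | add u v hu hv => simp only [map_add, hu, hv]
  · intro g h n
    induction n using TensorProduct.induction_on with
    | zero => simp
    | tmul x y => rw [rHEt, rHEt, rHEt, Sinv_mul Sinv hS, h2]
    | add u v hu hv => simp only [map_add, hu, hv]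
  · intro h a n ι r
    induction n using TensorProduct.induction_on with
    | zero => simp
    | tmul x y =>
      simp only [rEt, rHEt]
      rw [keyK Sinv hS act h1 h2 h4 h y a r, TensorProduct.tmul_sum]
    | add u v hu hv => simp only [map_add, hu, hv, Finset.sum_add_distrib]
  · intro a b n
    induction n using TensorProduct.induction_on with
    | zero => simp
    | tmul x y => rw [rEt, lEt, lEt, rEt]
    | add u v hu hv => simp only [map_add, hu, hv]
  · intro a h n
    induction n using TensorProduct.induction_on with
    | zero => simp
    | tmul x y => rw [rHEt, lEt, lEt, rHEt]
    | add u v hu hv => simp only [map_add, hu, hv]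
  · intro h a n
    induction n using TensorProduct.induction_on with
    | zero => simp
    | tmul x y => rw [rEt, lHEt, lHEt, rEt]
    | add u v hu hv => simp only [map_add, hu, hv]
  · intro g h n
    induction n using TensorProduct.induction_on with
    | zero => simp
    | tmul x y => rw [rHEt, lHEt, lHEt, rHEt]
    | add u v hu hv => simp only [map_add, hu, hv]
end
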